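/- The Gaussian measure of the annulus satisfies γ^m(A^m_ε) ≤ (e^{-ρ(m/2)}/√π) · e^{1/2} · (1 - 1/m)^{(m-1)/2} · 2ε√(m-1), where ρ is the function appearing in Stirling's approximation, satisfying 0 < ρ(x) < 1/(12x). -/

import Mathlib

open Real MeasureTheory

/-- The `m`-dimensional standard Gaussian measure on `ℝ^m`. -/
noncomputable def stdGaussian (m : ℕ) : Measure (EuclideanSpace ℝ (Fin m)) :=
  volume.withDensity
    (fun x => ENNReal.ofReal ((2 * Real.pi) ^ (-(m : ℝ) / 2) * Real.exp (-‖x‖ ^ 2 / 2)))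

/-- The annulus `A^m_ε` around the sphere of radius `√(m-1)`. -/
def gaussAnnulus (m : ℕ) (ε : ℝ) : Set (EuclideanSpace ℝ (Fin m)) :=
  {x | (1 - ε) * Real.sqrt ((m : ℝ) - 1) < ‖x‖ ∧ ‖x‖ < (1 + ε) * Real.sqrt ((m : ℝ) - 1)}

/-- The radial profile `r ^ n * exp (-r²/2)` is maximized at `r = √n`. -/
lemma radial_bound (n : ℕ) (hn : 0 < n) (r : ℝ) (hr : 0 ≤ r) :
    r ^ n * Real.exp (-r ^ 2 / 2) ≤ (n : ℝ) ^ ((n : ℝ) / 2) * Real.exp (-(n : ℝ) / 2) := by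
  have hn' : (0 : ℝ) < n := Nat.cast_pos.2 hn
  rcases hr.eq_or_lt with h | h
  · rw [← h, zero_pow hn.ne', zero_mul]
    positivity
  · have key : r ^ 2 / (n : ℝ) ≤ Real.exp (r ^ 2 / (n : ℝ) - 1) := by
      have := Real.add_one_le_exp (r ^ 2 / (n : ℝ) - 1)
      linarith
    have h1 : (r ^ 2 / (n : ℝ)) ^ ((n : ℝ) / 2)
        ≤ Real.exp (r ^ 2 / (n : ℝ) - 1) ^ ((n : ℝ) / 2) :=
      Real.rpow_le_rpow (by positivity) key (by positivity)
    rw [Real.div_rpow (by positivity) hn'.le, ← Real.exp_mul] at h1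
    have hexp : (r ^ 2 / (n : ℝ) - 1) * ((n : ℝ) / 2) = (r ^ 2 - (n : ℝ)) / 2 := by
      field_simp
    rw [hexp] at h1
    have hr2 : (r ^ 2) ^ ((n : ℝ) / 2) = r ^ n := by
      rw [← Real.rpow_natCast r 2, ← Real.rpow_mul hr]
      have h2n : ((2 : ℕ) : ℝ) * ((n : ℝ) / 2) = (n : ℝ) := by push_cast; ring
      rw [h2n, Real.rpow_natCast]
    rw [hr2] at h1
    have h2 : r ^ n ≤ (n : ℝ) ^ ((n : ℝ) / 2) * Real.exp ((r ^ 2 - (n : ℝ)) / 2) := by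
      have hpos : (0 : ℝ) < (n : ℝ) ^ ((n : ℝ) / 2) := by positivity
      rw [div_le_iff₀ hpos] at h1
      linarith [h1]
    calc r ^ n * Real.exp (-r ^ 2 / 2)
        ≤ (n : ℝ) ^ ((n : ℝ) / 2) * Real.exp ((r ^ 2 - (n : ℝ)) / 2) * Real.exp (-r ^ 2 / 2) :=
          mul_le_mul_of_nonneg_right h2 (Real.exp_pos _).le
      _ = (n : ℝ) ^ ((n : ℝ) / 2) * Real.exp (-(n : ℝ) / 2) := by
          rw [mul_assoc, ← Real.exp_add]
          ring_nf

/-- The constant identity resulting from Stirling's formula. -/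
lemma const_eq (m : ℕ) (hm : 2 ≤ m) (ρ : ℝ → ℝ)
    (hΓ : Real.Gamma ((m : ℝ) / 2) = Real.sqrt (2 * Real.pi / ((m : ℝ) / 2)) *
      (((m : ℝ) / 2) / Real.exp 1) ^ ((m : ℝ) / 2) * Real.exp (ρ ((m : ℝ) / 2))) :
    (m : ℝ) * (Real.sqrt Real.pi ^ m / Real.Gamma ((m : ℝ) / 2 + 1)) *
        (2 * Real.pi) ^ (-(m : ℝ) / 2) *
        (((m : ℝ) - 1) ^ (((m : ℝ) - 1) / 2) * Real.exp (-((m : ℝ) - 1) / 2))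
      = Real.exp (-ρ ((m : ℝ) / 2)) / Real.sqrt Real.pi * Real.exp (1 / 2) *
        (1 - 1 / (m : ℝ)) ^ (((m : ℝ) - 1) / 2) := by
  have hp2 : (2 : ℝ) ≤ (m : ℝ) := by exact_mod_cast hm
  have hp0 : (0 : ℝ) < (m : ℝ) := by linarith
  have hq0 : (0 : ℝ) < (m : ℝ) - 1 := by linarith
  have hs0 : (0 : ℝ) < (m : ℝ) / 2 := by linarith
  have hπ := Real.pi_pos
  have h1m : (0 : ℝ) < 1 - 1 / (m : ℝ) := by
    rw [sub_pos, div_lt_one hp0]; linarith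
  have hΓ1 : Real.Gamma ((m : ℝ) / 2 + 1) = ((m : ℝ) / 2) *
      (Real.sqrt (2 * Real.pi / ((m : ℝ) / 2)) *
        (((m : ℝ) / 2) / Real.exp 1) ^ ((m : ℝ) / 2) * Real.exp (ρ ((m : ℝ) / 2))) := by
    rw [Real.Gamma_add_one hs0.ne', hΓ]
  have hL : (0 : ℝ) < (m : ℝ) * (Real.sqrt Real.pi ^ m / Real.Gamma ((m : ℝ) / 2 + 1)) *
        (2 * Real.pi) ^ (-(m : ℝ) / 2) *
        (((m : ℝ) - 1) ^ (((m : ℝ) - 1) / 2) * Real.exp (-((m : ℝ) - 1) / 2)) := by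
    have hΓpos : 0 < Real.Gamma ((m : ℝ) / 2 + 1) := Real.Gamma_pos_of_pos (by linarith)
    positivity
  have hR : (0 : ℝ) < Real.exp (-ρ ((m : ℝ) / 2)) / Real.sqrt Real.pi * Real.exp (1 / 2) *
        (1 - 1 / (m : ℝ)) ^ (((m : ℝ) - 1) / 2) := by
    positivity
  apply Real.log_injOn_pos (Set.mem_Ioi.2 hL) (Set.mem_Ioi.2 hR)
  have h1m' : 1 - 1 / (m : ℝ) = ((m : ℝ) - 1) / (m : ℝ) := by field_simp
  rw [hΓ1, h1m']
  simp (disch := positivity) only [Real.log_mul, Real.log_div, Real.log_rpow,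
    Real.log_exp, Real.log_pow, Real.log_sqrt]
  ring

theorem gaussian_annulus_upper_bound (m : ℕ) (hm : 2 ≤ m) (ε : ℝ) (hε : 0 < ε)
    (ρ : ℝ → ℝ)
    (hρ : ∀ x > (0 : ℝ),
      Real.Gamma x = Real.sqrt (2 * Real.pi / x) * (x / Real.exp 1) ^ x * Real.exp (ρ x))
    (hρ' : ∀ x > (0 : ℝ), ρ x ∈ Set.Ioo 0 (1 / (12 * x))) :
    (stdGaussian m (gaussAnnulus m ε)).toReal ≤
      Real.exp (-ρ ((m : ℝ) / 2)) / Real.sqrt Real.pi * Real.exp (1 / 2) *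
        (1 - 1 / (m : ℝ)) ^ (((m : ℝ) - 1) / 2) * (2 * ε * Real.sqrt ((m : ℝ) - 1)) := by
  have hp2 : (2 : ℝ) ≤ (m : ℝ) := by exact_mod_cast hm
  have hq0 : (0 : ℝ) < (m : ℝ) - 1 := by linarith
  set a : ℝ := (1 - ε) * Real.sqrt ((m : ℝ) - 1) with ha
  set b : ℝ := (1 + ε) * Real.sqrt ((m : ℝ) - 1) with hb
  set c : ℝ := (2 * Real.pi) ^ (-(m : ℝ) / 2) with hc
  have hπ := Real.pi_pos
  have hc0 : 0 < c := by rw [hc]; positivity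
  have hAset : gaussAnnulus m ε
      = (fun x : EuclideanSpace ℝ (Fin m) => ‖x‖) ⁻¹' Set.Ioo a b := rfl
  have hA : MeasurableSet (gaussAnnulus m ε) := by
    rw [hAset]; exact measurable_norm measurableSet_Ioo
  -- Step 1: express the measure as a real integral
  have h2 : (stdGaussian m (gaussAnnulus m ε)).toReal
      = ∫ x in gaussAnnulus m ε, c * Real.exp (-‖x‖ ^ 2 / 2) := by
    rw [stdGaussian, withDensity_apply _ hA]
    exact (integral_eq_lintegral_of_nonneg_ae
      (Filter.Eventually.of_forall fun x => by positivity)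
      ((Continuous.aestronglyMeasurable (by fun_prop)).restrict)).symm
  -- Step 2: radial reduction
  set f : ℝ → ℝ := (Set.Ioo a b).indicator (fun r => c * Real.exp (-r ^ 2 / 2)) with hf
  have h3 : ∫ x in gaussAnnulus m ε, c * Real.exp (-‖x‖ ^ 2 / 2)
      = ∫ x : EuclideanSpace ℝ (Fin m), f ‖x‖ := by
    rw [← integral_indicator hA]
    congr 1
  haveI : Nontrivial (EuclideanSpace ℝ (Fin m)) :=
    Module.nontrivial_of_finrank_pos (R := ℝ) (by rw [finrank_euclideanSpace_fin]; omega)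
  have h4 := integral_fun_norm_addHaar (volume : Measure (EuclideanSpace ℝ (Fin m))) f
  rw [finrank_euclideanSpace_fin] at h4
  have h5 : (∫ y in Set.Ioi (0 : ℝ), y ^ (m - 1) • f y)
      = ∫ y in Set.Ioi (0 : ℝ) ∩ Set.Ioo a b,
          y ^ (m - 1) * (c * Real.exp (-y ^ 2 / 2)) := by
    rw [← setIntegral_indicator measurableSet_Ioo]
    congr 1
    funext y
    by_cases hy : y ∈ Set.Ioo a b <;>
      simp [hf, Set.indicator_of_mem, Set.indicator_of_notMem, hy]
  -- Step 3: bound the one-dimensional integral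
  set M : ℝ := ((m : ℝ) - 1) ^ (((m : ℝ) - 1) / 2) * Real.exp (-((m : ℝ) - 1) / 2) * c with hM
  have hM0 : 0 ≤ M := by rw [hM]; positivity
  have hIfin : volume (Set.Ioi (0 : ℝ) ∩ Set.Ioo a b) < ⊤ :=
    lt_of_le_of_lt (measure_mono Set.inter_subset_right) (by simp [Real.volume_Ioo])
  have hcast : ((m - 1 : ℕ) : ℝ) = (m : ℝ) - 1 := by
    have h1 : 1 ≤ m := by omega
    push_cast [h1]
    ring
  have hbound : ∀ y ∈ Set.Ioi (0 : ℝ) ∩ Set.Ioo a b,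
      ‖y ^ (m - 1) * (c * Real.exp (-y ^ 2 / 2))‖ ≤ M := by
    intro y hy
    have hy0 : (0 : ℝ) < y := hy.1
    rw [Real.norm_eq_abs, abs_of_nonneg (by positivity)]
    have hrb := radial_bound (m - 1) (by omega) y hy0.le
    rw [hcast] at hrb
    rw [hM]
    calc y ^ (m - 1) * (c * Real.exp (-y ^ 2 / 2))
        = y ^ (m - 1) * Real.exp (-y ^ 2 / 2) * c := by ring
      _ ≤ ((m : ℝ) - 1) ^ (((m : ℝ) - 1) / 2) * Real.exp (-((m : ℝ) - 1) / 2) * c :=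
          mul_le_mul_of_nonneg_right hrb hc0.le
  have h6 : (∫ y in Set.Ioi (0 : ℝ) ∩ Set.Ioo a b, y ^ (m - 1) * (c * Real.exp (-y ^ 2 / 2)))
      ≤ M * (2 * ε * Real.sqrt ((m : ℝ) - 1)) := by
    have hwidth : (volume (Set.Ioi (0 : ℝ) ∩ Set.Ioo a b)).toReal
        ≤ 2 * ε * Real.sqrt ((m : ℝ) - 1) := by
      apply ENNReal.toReal_le_of_le_ofReal (by positivity)
      calc volume (Set.Ioi (0 : ℝ) ∩ Set.Ioo a b) ≤ volume (Set.Ioo a b) :=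
            measure_mono Set.inter_subset_right
        _ = ENNReal.ofReal (b - a) := Real.volume_Ioo
        _ ≤ ENNReal.ofReal (2 * ε * Real.sqrt ((m : ℝ) - 1)) := by
            apply ENNReal.ofReal_le_ofReal
            rw [ha, hb]; ring_nf; exact le_refl _
    calc (∫ y in Set.Ioi (0 : ℝ) ∩ Set.Ioo a b, y ^ (m - 1) * (c * Real.exp (-y ^ 2 / 2)))
        ≤ ‖∫ y in Set.Ioi (0 : ℝ) ∩ Set.Ioo a b, y ^ (m - 1) * (c * Real.exp (-y ^ 2 / 2))‖ :=
          le_norm_self _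
      _ ≤ M * (volume (Set.Ioi (0 : ℝ) ∩ Set.Ioo a b)).toReal :=
          norm_setIntegral_le_of_norm_le_const hIfin
            hbound
      _ ≤ M * (2 * ε * Real.sqrt ((m : ℝ) - 1)) :=
          mul_le_mul_of_nonneg_left hwidth hM0
  -- Step 4: volume of the unit ball
  haveI : Nonempty (Fin m) := ⟨⟨0, by omega⟩⟩
  have hΓpos : 0 < Real.Gamma ((m : ℝ) / 2 + 1) := Real.Gamma_pos_of_pos (by linarith)
  have hball : ((volume (Metric.ball (0 : EuclideanSpace ℝ (Fin m)) 1)).toReal)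
      = Real.sqrt Real.pi ^ m / Real.Gamma ((m : ℝ) / 2 + 1) := by
    rw [EuclideanSpace.volume_ball]
    simp only [Fintype.card_fin, ENNReal.ofReal_one, one_pow, one_mul]
    exact ENNReal.toReal_ofReal (by positivity)
  -- Step 5: assemble
  have hconst := const_eq m hm ρ (hρ ((m : ℝ) / 2) (by linarith))
  have hVt : 0 ≤ (volume (Metric.ball (0 : EuclideanSpace ℝ (Fin m)) 1)).toReal :=
    ENNReal.toReal_nonneg
  rw [h2, h3, h4, nsmul_eq_mul, smul_eq_mul, h5]
  calc (m : ℝ) * ((volume (Metric.ball (0 : EuclideanSpace ℝ (Fin m)) 1)).toReal *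
        ∫ y in Set.Ioi (0 : ℝ) ∩ Set.Ioo a b, y ^ (m - 1) * (c * Real.exp (-y ^ 2 / 2)))
      ≤ (m : ℝ) * ((volume (Metric.ball (0 : EuclideanSpace ℝ (Fin m)) 1)).toReal *
          (M * (2 * ε * Real.sqrt ((m : ℝ) - 1)))) := by
        apply mul_le_mul_of_nonneg_left _ (by positivity)
        exact mul_le_mul_of_nonneg_left h6 hVt
    _ = Real.exp (-ρ ((m : ℝ) / 2)) / Real.sqrt Real.pi * Real.exp (1 / 2) *
          (1 - 1 / (m : ℝ)) ^ (((m : ℝ) - 1) / 2) * (2 * ε * Real.sqrt ((m : ℝ) - 1)) := by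
        rw [hball, hM]
        linear_combination (2 * ε * Real.sqrt ((m : ℝ) - 1)) * hconst
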